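/- Let p ≥ 1, β > 0, c ∈ ℝ^p and m > 0. Let Z : [−m,0] × ℝ^p → ℝ be continuous with Z(t,·) ℤ^p-periodic for each t, and let f : ℝ^p → ℝ be continuous and ℤ^p-periodic. Suppose u₁, u₂ : [−m,0] × ℝ^p → ℝ are continuous, ℤ^p-periodic in x, continuously differentiable in t and twice continuously differentiable in x on [−m,0] × ℝ^p, satisfy u₁(0,·) = u₂(0,·) = f, and for i = 1, 2 and all (t,x) ∈ [−m,0] × ℝ^p: (1/(2β))·Δu_i(t,x) + ∂ₜu_i(t,x) − ( (1/2)·‖c − ∇u_i(t,x)‖² + Z(t,x) ) = 0. Then u₁ = u₂ on [−m,0] × ℝ^p. -/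

import Mathlib

open MeasureTheory Set
open scoped RealInnerProductSpace

/-- The vector of `ℝ^p` with integer coordinates `k`. -/
def intVec (p : ℕ) (k : Fin p → ℤ) : EuclideanSpace ℝ (Fin p) := WithLp.toLp 2 (fun i => (k i : ℝ))

/-- The spatial Laplacian of `f : ℝ^p → ℝ`: the sum of the second derivatives in the
directions of the standard orthonormal basis (the trace of the Hessian). -/
noncomputable def laplacian {p : ℕ} (f : EuclideanSpace ℝ (Fin p) → ℝ)
    (x : EuclideanSpace ℝ (Fin p)) : ℝ :=
  ∑ i : Fin p,
    fderiv ℝ (fun y => fderiv ℝ f y (EuclideanSpace.single i 1)) x (EuclideanSpace.single i 1)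

section Aux

-- second derivative test
lemma secondDerivTest {h : ℝ → ℝ} (hC : ContDiff ℝ 2 h) (hmax : IsLocalMax h 0) :
    deriv (deriv h) 0 ≤ 0 := by
  by_contra hpos
  push_neg at hpos
  set a := deriv (deriv h) 0 with ha
  have hd1 : deriv h 0 = 0 := hmax.deriv_eq_zero
  have hC1 : ContDiff ℝ 1 (deriv h) := by
    have := (contDiff_succ_iff_deriv (n := 1)).1 (by exact_mod_cast hC)
    exact this.2.2
  have hder : HasDerivAt (deriv h) a 0 :=
    ((hC1.differentiable one_ne_zero) 0).hasDerivAt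
  have hslope : Filter.Tendsto (slope (deriv h) 0) (nhdsWithin 0 {(0:ℝ)}ᶜ) (nhds a) :=
    hasDerivAt_iff_tendsto_slope.1 hder
  have hslope' : Filter.Tendsto (slope (deriv h) 0) (nhdsWithin 0 (Ioi 0)) (nhds a) :=
    hslope.mono_left (nhdsWithin_mono 0 (fun s hs => ne_of_gt hs))
  have hev : ∀ᶠ s in nhdsWithin 0 (Ioi (0:ℝ)), 0 < slope (deriv h) 0 s :=
    hslope'.eventually (eventually_gt_nhds hpos)
  have hev2 : ∀ᶠ s in nhdsWithin 0 (Ioi (0:ℝ)), deriv h s > 0 ∧ h s ≤ h 0 := by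
    filter_upwards [hev, self_mem_nhdsWithin,
      (hmax.filter_mono nhdsWithin_le_nhds : ∀ᶠ s in nhdsWithin 0 (Ioi (0:ℝ)), h s ≤ h 0)]
      with s hs hs0 hsm
    refine ⟨?_, hsm⟩
    have : slope (deriv h) 0 s = deriv h s / s := by
      simp [slope, hd1, div_eq_inv_mul]
    rw [this] at hs
    have := mul_pos hs (show (0:ℝ) < s from hs0)
    rwa [div_mul_cancel₀ _ (ne_of_gt hs0)] at this
  rcases mem_nhdsGT_iff_exists_Ioo_subset.1 hev2 with ⟨u, hu, hsub⟩
  have hu0 : (0:ℝ) < u := hu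
  have hmono : StrictMonoOn h (Icc 0 (u/2)) := by
    apply strictMonoOn_of_deriv_pos (convex_Icc _ _) (hC.continuous.continuousOn)
    intro s hs
    rw [interior_Icc] at hs
    exact (hsub ⟨hs.1, lt_trans hs.2 (by linarith)⟩).1
  have hlt : h 0 < h (u/2) :=
    hmono ⟨le_rfl, by linarith⟩ ⟨by linarith, le_rfl⟩ (by linarith)
  have hle : h (u/2) ≤ h 0 := (hsub ⟨by linarith, by linarith⟩).2
  linarith


variable {E : Type*} [NormedAddCommGroup E] [NormedSpace ℝ E]

lemma line_hasDerivAt (x e : E) (s : ℝ) : HasDerivAt (fun s : ℝ => x + s • e) e s := by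
  simpa using (((hasDerivAt_id s).smul_const e).const_add x)

lemma diff_fderiv_apply {f : E → ℝ} (hf : ContDiff ℝ 2 f) (e x : E) :
    DifferentiableAt ℝ (fun y => fderiv ℝ f y e) x := by
  have h1 : ContDiff ℝ 1 (fderiv ℝ f) := hf.fderiv_right (by norm_num)
  exact ((h1.differentiable one_ne_zero) x).clm_apply (differentiableAt_const e)

lemma deriv_along {f : E → ℝ} (hf : ContDiff ℝ 2 f) (x e : E) :
    deriv (deriv (fun s : ℝ => f (x + s • e))) 0 =
      fderiv ℝ (fun y => fderiv ℝ f y e) x e := by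
  have hfd : Differentiable ℝ f := hf.differentiable (by norm_num)
  have h1 : ∀ s : ℝ, HasDerivAt (fun s : ℝ => f (x + s • e)) (fderiv ℝ f (x + s • e) e) s :=
    fun s => (hfd (x + s • e)).hasFDerivAt.comp_hasDerivAt s (line_hasDerivAt x e s)
  have hd1 : deriv (fun s : ℝ => f (x + s • e)) = fun s => fderiv ℝ f (x + s • e) e :=
    funext fun s => (h1 s).deriv
  rw [hd1]
  have h2 : HasDerivAt (fun s : ℝ => fderiv ℝ f (x + s • e) e)
      (fderiv ℝ (fun y => fderiv ℝ f y e) (x + (0:ℝ) • e) e) 0 :=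
    (diff_fderiv_apply hf e _).hasFDerivAt.comp_hasDerivAt 0 (line_hasDerivAt x e 0)
  have := h2.deriv
  simpa using this

lemma laplacian_nonpos {p : ℕ} {f : EuclideanSpace ℝ (Fin p) → ℝ} (hf : ContDiff ℝ 2 f)
    {x : EuclideanSpace ℝ (Fin p)} (hmax : ∀ y, f y ≤ f x) : laplacian f x ≤ 0 := by
  apply Finset.sum_nonpos
  intro i _
  rw [← deriv_along hf x (EuclideanSpace.single i 1)]
  apply secondDerivTest
  · exact hf.comp (contDiff_const.add (contDiff_id.smul contDiff_const))
  · exact Filter.Eventually.of_forall fun s => by simpa using hmax (x + s • EuclideanSpace.single i 1)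

lemma laplacian_sub {p : ℕ} {g h : EuclideanSpace ℝ (Fin p) → ℝ}
    (hg : ContDiff ℝ 2 g) (hh : ContDiff ℝ 2 h) (x : EuclideanSpace ℝ (Fin p)) :
    laplacian (fun y => g y - h y) x = laplacian g x - laplacian h x := by
  unfold laplacian
  rw [← Finset.sum_sub_distrib]
  refine Finset.sum_congr rfl fun i _ => ?_
  set e := EuclideanSpace.single i (1:ℝ) with he
  have hgd : Differentiable ℝ g := hg.differentiable (by norm_num)
  have hhd : Differentiable ℝ h := hh.differentiable (by norm_num)
  have h1 : (fun y => fderiv ℝ (fun z => g z - h z) y e)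
      = fun y => fderiv ℝ g y e - fderiv ℝ h y e := by
    funext y
    rw [fderiv_fun_sub (hgd y) (hhd y)]
    rfl
  rw [h1, fderiv_fun_sub (diff_fderiv_apply hg e x) (diff_fderiv_apply hh e x)]
  rfl

lemma fderiv_eq_of_sub_max {p : ℕ} {g h : EuclideanSpace ℝ (Fin p) → ℝ}
    (hg : ContDiff ℝ 2 g) (hh : ContDiff ℝ 2 h) {x : EuclideanSpace ℝ (Fin p)}
    (hmax : ∀ y, g y - h y ≤ g x - h x) : fderiv ℝ g x = fderiv ℝ h x := by
  have hloc : IsLocalMax (fun y => g y - h y) x := Filter.Eventually.of_forall hmax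
  have h0 : fderiv ℝ (fun y => g y - h y) x = 0 := hloc.fderiv_eq_zero
  rw [fderiv_fun_sub ((hg.differentiable (by norm_num)) x) ((hh.differentiable (by norm_num)) x)] at h0
  exact sub_eq_zero.1 h0

lemma gradient_congr {p : ℕ} {g h : EuclideanSpace ℝ (Fin p) → ℝ}
    {x : EuclideanSpace ℝ (Fin p)} (hfd : fderiv ℝ g x = fderiv ℝ h x) : gradient g x = gradient h x := by
  unfold gradient
  rw [hfd]

lemma shift_into_ball {p : ℕ} (hp : 1 ≤ p) (x : EuclideanSpace ℝ (Fin p)) :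
    ∃ k : Fin p → ℤ, x + intVec p k ∈ Metric.closedBall (0:EuclideanSpace ℝ (Fin p)) p := by
  refine ⟨fun i => -⌊x i⌋, ?_⟩
  set y := x + intVec p (fun i => -⌊x i⌋) with hy
  have hyi : ∀ i, |y i| ≤ 1 := by
    intro i
    have h1 : y i = x i - ⌊x i⌋ := by
      simp only [hy, intVec, PiLp.add_apply, PiLp.toLp_apply]
      push_cast
      ring
    rw [h1, abs_le]
    constructor
    · linarith [Int.floor_le (x i)]
    · linarith [Int.lt_floor_add_one (x i)]
  rw [Metric.mem_closedBall, dist_zero_right]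
  have hnorm : ‖y‖ = Real.sqrt (∑ i, ‖y i‖^2) := EuclideanSpace.norm_eq y
  rw [hnorm]
  have hsum : (∑ i, ‖y i‖^2) ≤ (p:ℝ) := by
    calc (∑ i, ‖y i‖^2) ≤ ∑ _i : Fin p, (1:ℝ) := by
          apply Finset.sum_le_sum
          intro i _
          have := hyi i
          have h2 : ‖y i‖ ≤ 1 := by rwa [Real.norm_eq_abs]
          nlinarith [norm_nonneg (y i)]
      _ = (p:ℝ) := by simp
  have hp1 : (1:ℝ) ≤ (p:ℝ) := by exact_mod_cast hp
  calc Real.sqrt (∑ i, ‖y i‖^2) ≤ Real.sqrt ((p:ℝ)^2) := by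
        apply Real.sqrt_le_sqrt
        nlinarith
    _ = (p:ℝ) := Real.sqrt_sq (by positivity)

set_option maxHeartbeats 1000000 in
lemma comparison {p : ℕ} (hp : 1 ≤ p) {β : ℝ} (hβ : 0 < β)
    (c : EuclideanSpace ℝ (Fin p)) {m : ℝ} (hm : 0 < m)
    (Z : ℝ → EuclideanSpace ℝ (Fin p) → ℝ)
    (u v : ℝ → EuclideanSpace ℝ (Fin p) → ℝ)
    (hucont : ContinuousOn (fun q : ℝ × EuclideanSpace ℝ (Fin p) => u q.1 q.2)
      (Icc (-m) 0 ×ˢ univ))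
    (hvcont : ContinuousOn (fun q : ℝ × EuclideanSpace ℝ (Fin p) => v q.1 q.2)
      (Icc (-m) 0 ×ˢ univ))
    (huper : ∀ t ∈ Icc (-m) (0:ℝ), ∀ x (k : Fin p → ℤ), u t (x + intVec p k) = u t x)
    (hvper : ∀ t ∈ Icc (-m) (0:ℝ), ∀ x (k : Fin p → ℤ), v t (x + intVec p k) = v t x)
    (hut : ∀ x, ContDiffOn ℝ 1 (fun t => u t x) (Icc (-m) 0))
    (hvt : ∀ x, ContDiffOn ℝ 1 (fun t => v t x) (Icc (-m) 0))
    (hux : ∀ t ∈ Icc (-m) (0:ℝ), ContDiff ℝ 2 (u t))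
    (hvx : ∀ t ∈ Icc (-m) (0:ℝ), ContDiff ℝ 2 (v t))
    (hfinal : u 0 = v 0)
    (hupde : ∀ t ∈ Icc (-m) (0:ℝ), ∀ x,
      (1 / (2 * β)) * laplacian (u t) x + derivWithin (fun s => u s x) (Icc (-m) 0) t -
        ((1 / 2) * ‖c - gradient (u t) x‖ ^ 2 + Z t x) = 0)
    (hvpde : ∀ t ∈ Icc (-m) (0:ℝ), ∀ x,
      (1 / (2 * β)) * laplacian (v t) x + derivWithin (fun s => v s x) (Icc (-m) 0) t -
        ((1 / 2) * ‖c - gradient (v t) x‖ ^ 2 + Z t x) = 0) :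
    ∀ t ∈ Icc (-m) (0:ℝ), ∀ x, u t x ≤ v t x := by
  have key : ∀ ε > (0:ℝ), ∀ t ∈ Icc (-m) (0:ℝ), ∀ x, u t x - v t x + ε * t ≤ 0 := by
    intro ε hε
    set φ : ℝ → EuclideanSpace ℝ (Fin p) → ℝ := fun t x => u t x - v t x + ε * t with hφ
    -- continuity of φ on the strip
    have hφcont : ContinuousOn (fun q : ℝ × EuclideanSpace ℝ (Fin p) => φ q.1 q.2)
        (Icc (-m) 0 ×ˢ univ) :=
      (hucont.sub hvcont).add ((continuous_const.mul continuous_fst).continuousOn)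
    -- compact set and max
    set S : Set (ℝ × EuclideanSpace ℝ (Fin p)) :=
      Icc (-m) 0 ×ˢ Metric.closedBall (0:EuclideanSpace ℝ (Fin p)) p with hS
    have hScomp : IsCompact S := isCompact_Icc.prod (isCompact_closedBall _ _)
    have hSsub : S ⊆ Icc (-m) 0 ×ˢ univ := prod_mono subset_rfl (subset_univ _)
    have hSne : S.Nonempty :=
      ⟨(0, 0), mem_prod.2 ⟨⟨by simp; linarith, by simp⟩, by simp⟩⟩
    obtain ⟨q, hqS, hqmax⟩ := hScomp.exists_isMaxOn hSne
      ((hφcont.mono hSsub) : ContinuousOn _ S)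
    obtain ⟨t₀, x₀⟩ := q
    have ht₀ : t₀ ∈ Icc (-m) (0:ℝ) := hqS.1
    -- global max via periodicity
    have hglob : ∀ t ∈ Icc (-m) (0:ℝ), ∀ x, φ t x ≤ φ t₀ x₀ := by
      intro t ht x
      obtain ⟨k, hk⟩ := shift_into_ball hp x
      have hper : φ t (x + intVec p k) = φ t x := by
        simp only [hφ, huper t ht x k, hvper t ht x k]
      rw [← hper]
      have hmem : (t, x + intVec p k) ∈ S := ⟨ht, hk⟩
      exact hqmax hmem
    -- if t₀ < 0 we derive a contradiction
    have ht₀0 : t₀ = 0 := by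
      by_contra hne
      have ht₀lt : t₀ < 0 := lt_of_le_of_ne ht₀.2 hne
      -- spatial part
      have hu2 : ContDiff ℝ 2 (u t₀) := hux t₀ ht₀
      have hv2 : ContDiff ℝ 2 (v t₀) := hvx t₀ ht₀
      have hsmax : ∀ y, u t₀ y - v t₀ y ≤ u t₀ x₀ - v t₀ x₀ := by
        intro y
        have := hglob t₀ ht₀ y
        simp only [hφ] at this
        linarith
      have hfd : fderiv ℝ (u t₀) x₀ = fderiv ℝ (v t₀) x₀ :=
        fderiv_eq_of_sub_max hu2 hv2 hsmax
      have hgrad : gradient (u t₀) x₀ = gradient (v t₀) x₀ := gradient_congr hfd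
      have hlap : laplacian (u t₀) x₀ - laplacian (v t₀) x₀ ≤ 0 := by
        rw [← laplacian_sub hu2 hv2 x₀]
        exact laplacian_nonpos (hu2.sub hv2) hsmax
      -- time part
      set ψ : ℝ → ℝ := fun s => u s x₀ - v s x₀ + ε * s with hψ
      have hUD : UniqueDiffWithinAt ℝ (Icc (-m) (0:ℝ)) t₀ :=
        (uniqueDiffOn_Icc (by linarith : (-m:ℝ) < 0)) t₀ ht₀
      have hdu : DifferentiableWithinAt ℝ (fun s => u s x₀) (Icc (-m) 0) t₀ :=
        ((hut x₀).differentiableOn one_ne_zero) t₀ ht₀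
      have hdv : DifferentiableWithinAt ℝ (fun s => v s x₀) (Icc (-m) 0) t₀ :=
        ((hvt x₀).differentiableOn one_ne_zero) t₀ ht₀
      have hdlin : DifferentiableWithinAt ℝ (fun s : ℝ => ε * s) (Icc (-m) 0) t₀ :=
        (differentiable_id.const_mul ε).differentiableAt.differentiableWithinAt
      have hdψ : DifferentiableWithinAt ℝ ψ (Icc (-m) 0) t₀ := (hdu.sub hdv).add hdlin
      set d : ℝ := derivWithin ψ (Icc (-m) 0) t₀ with hd
      have hdval : d = derivWithin (fun s => u s x₀) (Icc (-m) 0) t₀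
          - derivWithin (fun s => v s x₀) (Icc (-m) 0) t₀ + ε := by
        rw [hd, hψ]
        rw [derivWithin_fun_add (f := fun s => u s x₀ - v s x₀) (hdu.sub hdv) hdlin, derivWithin_fun_sub hdu hdv]
        congr 1
        have : HasDerivWithinAt (fun s : ℝ => ε * s) ε (Icc (-m) 0) t₀ := by
          simpa using ((hasDerivAt_id t₀).const_mul ε).hasDerivWithinAt
        exact this.derivWithin hUD
      -- PDE gives d ≥ ε
      have hAu := hupde t₀ ht₀ x₀
      have hAv := hvpde t₀ ht₀ x₀
      have hnorm : ‖c - gradient (u t₀) x₀‖ = ‖c - gradient (v t₀) x₀‖ := by rw [hgrad]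
      have hβ' : 0 < 1 / (2 * β) := by positivity
      have hsq : ‖c - gradient (u t₀) x₀‖ ^ 2 = ‖c - gradient (v t₀) x₀‖ ^ 2 := by
        rw [hnorm]
      have hprod : (0:ℝ) ≤ 1 / (2 * β) * (laplacian (v t₀) x₀ - laplacian (u t₀) x₀) :=
        mul_nonneg hβ'.le (by linarith)
      have hdge : ε ≤ d := by
        rw [hdval]
        nlinarith [hprod, hsq, hAu, hAv]
      -- max in time gives d ≤ 0
      have hmaxψ : IsLocalMaxOn ψ (Icc (-m) 0) t₀ := by
        have h1 : IsMaxOn ψ (Icc (-m) 0) t₀ :=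
          isMaxOn_iff.2 fun s hs => hglob s hs x₀
        exact h1.filter_mono (Filter.le_principal_iff.2 self_mem_nhdsWithin)
      have hcone : (0:ℝ) - t₀ ∈ posTangentConeAt (Icc (-m) (0:ℝ)) t₀ := by
        apply sub_mem_posTangentConeAt_of_segment_subset
        rw [segment_eq_Icc ht₀.2]
        exact Icc_subset_Icc ht₀.1 le_rfl
      have hnp := hmaxψ.hasFDerivWithinAt_nonpos hdψ.hasDerivWithinAt.hasFDerivWithinAt hcone
      simp only [ContinuousLinearMap.smulRight_apply, ContinuousLinearMap.one_apply,
        ContinuousLinearMap.toSpanSingleton_apply,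
        smul_eq_mul] at hnp
      have : d ≤ 0 := by nlinarith [hnp, ht₀lt]
      linarith
    -- conclude: max value is 0
    intro t ht x
    have := hglob t ht x
    rw [ht₀0] at this
    simp only [hφ, hfinal, mul_zero, sub_self, zero_add, add_zero] at this ⊢
    convert this using 2
  -- let ε → 0
  intro t ht x
  by_contra hlt
  push_neg at hlt
  set δ := u t x - v t x with hδ
  have hδpos : 0 < δ := by simpa [hδ] using sub_pos.2 hlt
  have hεch : 0 < δ / (2 * m) := by positivity
  have := key (δ / (2 * m)) hεch t ht x
  have htm : -m ≤ t := ht.1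
  have h1 : δ / (2 * m) * t ≥ -(δ/2) := by
    have : δ / (2 * m) * (-m) = -(δ/2) := by field_simp
    nlinarith [hεch, ht.1]
  linarith

end Aux

/-- uniqueness of classical periodic solutions of the viscous
Hamilton–Jacobi equation on `[−m,0]` with final condition `f`. -/
theorem stmt15 (p : ℕ) (hp : 1 ≤ p) (β : ℝ) (hβ : 0 < β)
    (c : EuclideanSpace ℝ (Fin p)) (m : ℝ) (hm : 0 < m)
    (Z : ℝ → EuclideanSpace ℝ (Fin p) → ℝ)
    (hZcont : ContinuousOn (fun q : ℝ × EuclideanSpace ℝ (Fin p) => Z q.1 q.2)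
      (Icc (-m) 0 ×ˢ univ))
    (hZper : ∀ t ∈ Icc (-m) (0 : ℝ), ∀ x (k : Fin p → ℤ), Z t (x + intVec p k) = Z t x)
    (f : EuclideanSpace ℝ (Fin p) → ℝ) (hfcont : Continuous f)
    (hfper : ∀ x (k : Fin p → ℤ), f (x + intVec p k) = f x)
    (u : Fin 2 → ℝ → EuclideanSpace ℝ (Fin p) → ℝ)
    (hucont : ∀ i, ContinuousOn (fun q : ℝ × EuclideanSpace ℝ (Fin p) => u i q.1 q.2)
      (Icc (-m) 0 ×ˢ univ))
    (huper : ∀ i, ∀ t ∈ Icc (-m) (0 : ℝ), ∀ x (k : Fin p → ℤ),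
      u i t (x + intVec p k) = u i t x)
    (hut : ∀ i x, ContDiffOn ℝ 1 (fun t => u i t x) (Icc (-m) 0))
    (hux : ∀ i, ∀ t ∈ Icc (-m) (0 : ℝ), ContDiff ℝ 2 (u i t))
    (hfinal : ∀ i, u i 0 = f)
    (hpde : ∀ i, ∀ t ∈ Icc (-m) (0 : ℝ), ∀ x,
      (1 / (2 * β)) * laplacian (u i t) x +
        derivWithin (fun s => u i s x) (Icc (-m) 0) t -
        ((1 / 2) * ‖c - gradient (u i t) x‖ ^ 2 + Z t x) = 0) :
    ∀ t ∈ Icc (-m) (0 : ℝ), ∀ x, u 0 t x = u 1 t x := by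
  have h01 := comparison hp hβ c hm Z (u 0) (u 1) (hucont 0) (hucont 1) (huper 0) (huper 1)
    (hut 0) (hut 1) (hux 0) (hux 1) (by rw [hfinal 0, hfinal 1]) (hpde 0) (hpde 1)
  have h10 := comparison hp hβ c hm Z (u 1) (u 0) (hucont 1) (hucont 0) (huper 1) (huper 0)
    (hut 1) (hut 0) (hux 1) (hux 0) (by rw [hfinal 0, hfinal 1]) (hpde 1) (hpde 0)
  intro t ht x
  exact le_antisymm (h01 t ht x) (h10 t ht x)
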